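/- The minimal (equivalently, generic) zero-energy degeneracy of a k-QSAT instance is bounded above by the number of satisfying assignments of any classical k-SAT problem on the same interaction hypergraph: if R_G := min over all choices φ of dim ker H_φ, then for every assignment of a forbidden configuration c_m ∈ {0,1}^{S_m} to each clause m, one has R_G ≤ #{ σ ∈ {0,1}^N : for all m, the restriction of σ to S_m differs from c_m }. -/
import Mathlib


open scoped BigOperators

noncomputable section

/-- The matrix of the rank-one projector `|φ⟩⟨φ|` acting on the qubits in the
`k`-element set `S` and as the identity on the remaining qubits. -/
def clauseProj {N : ℕ} (S : Finset (Fin N)) (φ : ({i // i ∈ S} → Fin 2) → ℂ) :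
    Matrix (Fin N → Fin 2) (Fin N → Fin 2) ℂ :=
  fun σ τ =>
    (if ∀ i : Fin N, i ∉ S → σ i = τ i then (1 : ℂ) else 0) *
      φ (fun i => σ i.1) * (starRingEnd ℂ) (φ (fun i => τ i.1))

/-- The `k`-QSAT Hamiltonian `H_φ = ∑ m, Π_m` associated to the interaction
hypergraph `S : Fin M → Finset (Fin N)` and the clause vectors `φ m`. -/
def qsatHam {N M : ℕ} (S : Fin M → Finset (Fin N))
    (φ : ∀ m, ({i // i ∈ S m} → Fin 2) → ℂ) :
    Matrix (Fin N → Fin 2) (Fin N → Fin 2) ℂ :=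
  ∑ m, clauseProj (S m) (φ m)

/-- `φ` is a unit vector. -/
def IsUnitVec {α : Type*} [Fintype α] (φ : α → ℂ) : Prop :=
  ∑ x, Complex.normSq (φ x) = 1

/-- The dimension of the zero-energy eigenspace `ker H_φ`. -/
def kerDim {N M : ℕ} (S : Fin M → Finset (Fin N))
    (φ : ∀ m, ({i // i ∈ S m} → Fin 2) → ℂ) : ℕ :=
  Module.finrank ℂ (LinearMap.ker (Matrix.mulVecLin (qsatHam S φ)))

/-- **Classical satisfying assignments bound the generic quantum degeneracy.**
The minimal zero-energy degeneracy `R_G` over all choices of (unit) clause vectors is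
at most the number of satisfying assignments of any classical `k`-SAT problem obtained
by assigning a forbidden configuration `c m` to each clause. -/
theorem generic_degeneracy_le_classical_count (N M k : ℕ)
    (S : Fin M → Finset (Fin N)) (hS : ∀ m, (S m).card = k)
    (c : ∀ m, {i // i ∈ S m} → Fin 2) :
    sInf {r : ℕ | ∃ φ : ∀ m, ({i // i ∈ S m} → Fin 2) → ℂ,
        (∀ m, IsUnitVec (φ m)) ∧ kerDim S φ = r} ≤
      (Finset.univ.filter fun σ : Fin N → Fin 2 =>
        ∀ m, (fun i : {i // i ∈ S m} => σ i.1) ≠ c m).card := by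
  classical
  set φ : ∀ m, ({i // i ∈ S m} → Fin 2) → ℂ :=
    fun m x => if x = c m then 1 else 0 with hφ
  set d : (Fin N → Fin 2) → ℂ := fun σ =>
    ((Finset.univ.filter fun m : Fin M =>
      (fun i : {i // i ∈ S m} => σ i.1) = c m).card : ℂ) with hd
  have hdiag : qsatHam S φ = Matrix.diagonal d := by
    ext σ τ
    by_cases hστ : σ = τ
    · subst hστ
      simp only [qsatHam, Matrix.sum_apply, Matrix.diagonal_apply_eq, hd,
        clauseProj]
      rw [Finset.card_filter]
      push_cast
      refine Finset.sum_congr rfl fun m _ => ?_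
      by_cases h : (fun i : {i // i ∈ S m} => σ i.1) = c m
      · simp [hφ, h]
      · simp [hφ, h]
    · simp only [qsatHam, Matrix.sum_apply, Matrix.diagonal_apply_ne _ hστ]
      refine Finset.sum_eq_zero fun m _ => ?_
      simp only [clauseProj, hφ]
      by_cases h1 : ∀ i : Fin N, i ∉ S m → σ i = τ i
      · -- then restrictions differ
        have : ¬((fun i : {i // i ∈ S m} => σ i.1) = c m ∧
            (fun i : {i // i ∈ S m} => τ i.1) = c m) := by
          rintro ⟨ha, hb⟩
          apply hστ
          funext i
          by_cases hi : i ∈ S m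
          · have := congrFun ha ⟨i, hi⟩
            have := congrFun hb ⟨i, hi⟩
            simp_all
          · exact h1 i hi
        rcases not_and_or.mp this with h | h
        · simp [h]
        · simp [h]
      · simp [h1]
  have hmem : kerDim S φ ∈ {r : ℕ | ∃ φ : ∀ m, ({i // i ∈ S m} → Fin 2) → ℂ,
      (∀ m, IsUnitVec (φ m)) ∧ kerDim S φ = r} := by
    refine ⟨φ, fun m => ?_, rfl⟩
    simp only [IsUnitVec, hφ]
    rw [Finset.sum_eq_single (c m)]
    · simp
    · intro x _ hx; simp [hx]
    · simp
  refine le_trans (Nat.sInf_le hmem) ?_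
  -- now compute kerDim
  have hrank : (qsatHam S φ).rank =
      Fintype.card {σ : Fin N → Fin 2 // d σ ≠ 0} := by
    rw [hdiag, Matrix.rank_diagonal]
  have hrn := LinearMap.finrank_range_add_finrank_ker
    (Matrix.mulVecLin (qsatHam S φ))
  have hrank' : Module.finrank ℂ (LinearMap.range (Matrix.mulVecLin (qsatHam S φ)))
      = (qsatHam S φ).rank := rfl
  have htot : Module.finrank ℂ ((Fin N → Fin 2) → ℂ)
      = Fintype.card (Fin N → Fin 2) := Module.finrank_fintype_fun_eq_card ℂ
  -- kerDim = total - rank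
  have hker : kerDim S φ = Fintype.card (Fin N → Fin 2)
      - Fintype.card {σ : Fin N → Fin 2 // d σ ≠ 0} := by
    unfold kerDim
    omega
  rw [hker]
  have hcompl : Fintype.card (Fin N → Fin 2)
      - Fintype.card {σ : Fin N → Fin 2 // d σ ≠ 0}
      = Fintype.card {σ : Fin N → Fin 2 // ¬ d σ ≠ 0} := by
    have := Fintype.card_subtype_compl (fun σ : Fin N → Fin 2 => d σ ≠ 0)
    omega
  rw [hcompl]
  have : ∀ σ : Fin N → Fin 2, (¬ d σ ≠ 0) ↔
      ∀ m, (fun i : {i // i ∈ S m} => σ i.1) ≠ c m := by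
    intro σ
    simp only [not_not, hd, Nat.cast_eq_zero, Finset.card_eq_zero,
      Finset.filter_eq_empty_iff, Finset.mem_univ, true_implies]
  rw [Fintype.card_subtype]
  exact le_of_eq (by congr 1; ext σ; simp only [Finset.mem_filter, this σ])


end
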